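/- Let C be a triangulated category endowed with a weight structure w, let i ∈ ℤ, and let f : M → M' be a morphism in C. Suppose given distinguished triangles B → M → A → B[1] and B' → M' → A' → B'[1] with B, B' ∈ C_{w≤i} and A, A' ∈ C_{w≥i+1}, and an isomorphism g : B → B' such that the square formed by g, f and the morphisms B → M, B' → M' commutes. Then any cone of f belongs to C_{w≥i+1}. -/

import Mathlib

open CategoryTheory CategoryTheory.Limits CategoryTheory.Pretriangulated CategoryTheory.Category
open scoped ZeroObject

universe w v u

/-- `X` is a retract of `Y`: the identity of `X` factors through `Y`. -/
def IsRetract {D : Type*} [Category D] (X Y : D) : Prop :=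
  ∃ (i : X ⟶ Y) (r : Y ⟶ X), i ≫ r = 𝟙 X

/-- A weight structure on a triangulated category `C`. -/
structure WeightStructure (C : Type u) [Category.{v} C] [Preadditive C] [HasZeroObject C]
    [HasShift C ℤ] [∀ n : ℤ, (shiftFunctor C n).Additive] [Pretriangulated C] where
  /-- the class `C_{w≤0}` -/
  LE : Set C
  /-- the class `C_{w≥0}` -/
  GE : Set C
  le_retract : ∀ ⦃X Y : C⦄, IsRetract X Y → Y ∈ LE → X ∈ LE
  ge_retract : ∀ ⦃X Y : C⦄, IsRetract X Y → Y ∈ GE → X ∈ GE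
  le_shift : ∀ X : C, X ∈ LE → X⟦(-1 : ℤ)⟧ ∈ LE
  ge_shift : ∀ X : C, X ∈ GE → X⟦(1 : ℤ)⟧ ∈ GE
  orthogonal : ∀ ⦃X Y : C⦄, X ∈ LE → Y ∈ GE → ∀ f : X ⟶ Y⟦(1 : ℤ)⟧, f = 0
  exists_decomp : ∀ M : C, ∃ (B A : C) (f : B ⟶ M) (g : M ⟶ A) (h : A ⟶ B⟦(1 : ℤ)⟧),
    B ∈ LE ∧ A⟦(-1 : ℤ)⟧ ∈ GE ∧ Triangle.mk f g h ∈ distTriang C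

namespace WeightStructure

variable {C : Type u} [Category.{v} C] [Preadditive C] [HasZeroObject C]
  [HasShift C ℤ] [∀ n : ℤ, (shiftFunctor C n).Additive] [Pretriangulated C]

/-- the class `C_{w≤i} = C_{w≤0}[i]` -/
def leSet (w : WeightStructure C) (i : ℤ) : Set C := {X : C | X⟦-i⟧ ∈ w.LE}

/-- the class `C_{w≥i} = C_{w≥0}[i]` -/
def geSet (w : WeightStructure C) (i : ℤ) : Set C := {X : C | X⟦-i⟧ ∈ w.GE}

/-- the class `C_{w=i} = C_{w≤i} ∩ C_{w≥i}` -/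
def eqSet (w : WeightStructure C) (i : ℤ) : Set C := w.leSet i ∩ w.geSet i

end WeightStructure

variable {C : Type u} [Category.{v} C] [Preadditive C] [HasZeroObject C]
  [HasShift C ℤ] [∀ n : ℤ, (shiftFunctor C n).Additive] [Pretriangulated C]


lemma isRetract_of_iso {D : Type*} [Category D] {X Y : D} (e : X ≅ Y) : IsRetract X Y :=
  ⟨e.hom, e.inv, e.hom_inv_id⟩

namespace WeightStructure

variable {C : Type u} [Category.{v} C] [Preadditive C] [HasZeroObject C]
  [HasShift C ℤ] [∀ n : ℤ, (shiftFunctor C n).Additive] [Pretriangulated C]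

lemma ge_iso (w : WeightStructure C) {X Y : C} (e : X ≅ Y) (hY : Y ∈ w.GE) : X ∈ w.GE :=
  w.ge_retract (isRetract_of_iso e) hY

lemma mem_geSet_of_retract (w : WeightStructure C) {n : ℤ} {X Y : C}
    (h : IsRetract X Y) (hY : Y ∈ w.geSet n) : X ∈ w.geSet n := by
  obtain ⟨j, r, hjr⟩ := h
  exact w.ge_retract ⟨(shiftFunctor C (-n)).map j, (shiftFunctor C (-n)).map r,
    by simp [← Functor.map_comp, hjr]⟩ hY

lemma hom_zero (w : WeightStructure C) {n : ℤ} {X Y : C}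
    (hX : X ∈ w.leSet n) (hY : Y ∈ w.geSet (n + 1)) (f : X ⟶ Y) : f = 0 := by
  have e : (shiftFunctor C (-n)).obj Y ≅ ((shiftFunctor C (-(n+1))).obj Y)⟦(1 : ℤ)⟧ :=
    (shiftFunctorAdd' C (-(n+1)) 1 (-n) (by ring)).app Y
  have h0 : (shiftFunctor C (-n)).map f ≫ e.hom = 0 := w.orthogonal hX hY _
  have h1 : (shiftFunctor C (-n)).map f = 0 := by
    rw [← comp_id ((shiftFunctor C (-n)).map f), ← e.hom_inv_id, ← assoc, h0, zero_comp]
  apply (shiftFunctor C (-n)).map_injective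
  rw [h1, Functor.map_zero]

lemma shift_one_mem_geSet (w : WeightStructure C) {n : ℤ} {A : C}
    (hA : A ∈ w.geSet n) : A⟦(1 : ℤ)⟧ ∈ w.geSet n := by
  have h1 : (A⟦-n⟧)⟦(1 : ℤ)⟧ ∈ w.GE := w.ge_shift _ hA
  refine w.ge_iso ?_ h1
  exact ((shiftFunctorAdd' C 1 (-n) (1 + -n) rfl).symm.app A) ≪≫
    ((shiftFunctorAdd' C (-n) 1 (1 + -n) (by ring)).app A)

end WeightStructure

/-- Proposition 2.1.3(16): if `f : M ⟶ M'` is compatible with an isomorphism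
`w_{≤i}M ⟶ w_{≤i}M'` of (choices of) weight truncations, then any cone of `f`
belongs to `C_{w≥i+1}`. -/
theorem cone_in_geSet_of_compatible_iso (w : WeightStructure C) (i : ℤ)
    {M M' : C} (f : M ⟶ M')
    (B A B' A' : C) (b : B ⟶ M) (a : M ⟶ A) (d : A ⟶ B⟦(1 : ℤ)⟧)
    (b' : B' ⟶ M') (a' : M' ⟶ A') (d' : A' ⟶ B'⟦(1 : ℤ)⟧)
    (hT : Triangle.mk b a d ∈ (distTriang C))
    (hT' : Triangle.mk b' a' d' ∈ (distTriang C))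
    (hB : B ∈ w.leSet i) (hB' : B' ∈ w.leSet i)
    (hA : A ∈ w.geSet (i + 1)) (hA' : A' ∈ w.geSet (i + 1))
    (g : B ≅ B') (hg : g.hom ≫ b' = b ≫ f) :
    ∀ (Z : C) (u : M' ⟶ Z) (v : Z ⟶ M⟦(1 : ℤ)⟧),
      Triangle.mk f u v ∈ (distTriang C) → Z ∈ w.geSet (i + 1) := by
  intro Z u v hTZ
  -- Step 1: every morphism from an object of `leSet i` to `Z` vanishes
  have key : ∀ (X : C), X ∈ w.leSet i → ∀ φ : X ⟶ Z, φ = 0 := by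
    intro X hX φ
    have hA1 : A⟦(1 : ℤ)⟧ ∈ w.geSet (i + 1) := w.shift_one_mem_geSet hA
    have hT₃ := rot_of_distTriang _ (rot_of_distTriang _ (rot_of_distTriang _ hT))
    have hψa : (φ ≫ v) ≫ ((Triangle.mk b a d).rotate.rotate.rotate).mor₂ = 0 := by
      change (φ ≫ v) ≫ (-(shiftFunctor C (1 : ℤ)).map a) = 0
      rw [Preadditive.comp_neg, w.hom_zero hX hA1 ((φ ≫ v) ≫ (shiftFunctor C (1 : ℤ)).map a), neg_zero]
    obtain ⟨χ, hχ⟩ : ∃ χ : X ⟶ (shiftFunctor C (1 : ℤ)).obj B,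
        φ ≫ v = χ ≫ (-(shiftFunctor C (1 : ℤ)).map b) := Triangle.coyoneda_exact₂ _ hT₃ (φ ≫ v) hψa
    have hvf : v ≫ (shiftFunctor C (1 : ℤ)).map f = 0 := comp_distTriang_mor_zero₃₁ _ hTZ
    have hχb : (χ ≫ (shiftFunctor C (1 : ℤ)).map g.hom) ≫
        (shiftFunctor C (1 : ℤ)).map b' = 0 := by
      have h2 : (φ ≫ v) ≫ (shiftFunctor C (1 : ℤ)).map f = 0 := by
        rw [assoc, hvf, comp_zero]
      rw [hχ] at h2
      rw [assoc, Preadditive.neg_comp, Preadditive.comp_neg, neg_eq_zero,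
        ← Functor.map_comp, ← hg, Functor.map_comp, ← assoc] at h2
      exact h2
    obtain ⟨ξ, hξ⟩ := Triangle.coyoneda_exact₁ _ hT' _ hχb
    have hξ0 : ξ = 0 := w.hom_zero hX hA' ξ
    have hχ0 : χ = 0 := by
      have h3 : χ ≫ (shiftFunctor C (1 : ℤ)).map g.hom = 0 := by
        rw [hξ, hξ0, zero_comp]
        rfl
      exact (cancel_mono ((shiftFunctor C (1 : ℤ)).map g.hom)).1 (h3.trans zero_comp.symm)
    have hφv : φ ≫ v = 0 := by
      rw [hχ, hχ0, zero_comp]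
    obtain ⟨η, hη⟩ := Triangle.coyoneda_exact₃ _ hTZ φ hφv
    have hηa' : η ≫ (Triangle.mk b' a' d').mor₂ = 0 := w.hom_zero hX hA' _
    obtain ⟨θ, hθ⟩ : ∃ θ : X ⟶ B', η = θ ≫ b' := Triangle.coyoneda_exact₂ _ hT' η hηa'
    have hb'u : b' ≫ u = 0 := by
      have h2 : f ≫ u = 0 := comp_distTriang_mor_zero₁₂ _ hTZ
      have h1 : g.hom ≫ b' ≫ u = 0 := by
        rw [← assoc, hg, assoc, h2, comp_zero]
      rw [← id_comp (b' ≫ u), ← g.inv_hom_id, assoc, h1, comp_zero]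
    rw [hη, hθ]
    change (θ ≫ b') ≫ u = 0
    rw [assoc, hb'u, comp_zero]
  -- Step 2: decompose `Z⟦-i⟧` and shift
  obtain ⟨B₁, A₁, f₁, g₁, h₁, hB₁, hA₁, hT₁⟩ := w.exists_decomp ((shiftFunctor C (-i)).obj Z)
  have hT₂ := Pretriangulated.Triangle.shift_distinguished _ hT₁ i
  rw [Pretriangulated.Triangle.shiftFunctor_eq] at hT₂
  set T₂ := (Pretriangulated.Triangle.shiftFunctor C i).obj (Triangle.mk f₁ g₁ h₁) with hT₂def
  have e : ((shiftFunctor C (-i)).obj Z)⟦i⟧ ≅ Z := (shiftFunctorCompIsoId C (-i) i (by ring)).app Z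
  have hB₀ : (B₁⟦i⟧ : C) ∈ w.leSet i := by
    have : IsRetract ((B₁⟦i⟧ : C)⟦-i⟧) B₁ :=
      isRetract_of_iso ((shiftFunctorCompIsoId C i (-i) (by ring)).app B₁)
    exact w.le_retract this hB₁
  have hmor : T₂.mor₁ = 0 := by
    have h0 : T₂.mor₁ ≫ e.hom = 0 := key _ hB₀ _
    exact (cancel_mono e.hom).1 (h0.trans zero_comp.symm)
  obtain ⟨r, hr⟩ := Triangle.yoneda_exact₂ _ hT₂ (𝟙 _) (by rw [hmor, zero_comp])
  have hret : IsRetract Z ((A₁⟦i⟧ : C)) := by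
    refine ⟨e.inv ≫ T₂.mor₂, r ≫ e.hom, ?_⟩
    calc (e.inv ≫ T₂.mor₂) ≫ r ≫ e.hom = e.inv ≫ (T₂.mor₂ ≫ r) ≫ e.hom :=
          (assoc _ _ _).trans (congrArg (e.inv ≫ ·) (assoc _ _ _).symm)
      _ = 𝟙 Z := (congrArg (fun (t : T₂.obj₂ ⟶ T₂.obj₂) => e.inv ≫ t ≫ e.hom) hr.symm).trans
          ((congrArg (e.inv ≫ ·) (id_comp e.hom)).trans e.inv_hom_id)
  refine w.mem_geSet_of_retract hret ?_
  -- `A₁⟦i⟧ ∈ geSet (i+1)` since `(A₁⟦i⟧)⟦-(i+1)⟧ ≅ A₁⟦-1⟧ ∈ GE`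
  refine w.ge_iso ?_ hA₁
  exact ((shiftFunctorAdd' C i (-(i+1)) (-1) (by ring)).app A₁).symm
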